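/- Take α = 2/Δt. For all pairs W = (w,v) and Φ = (φ,η) with w, φ : ℝ² → ℝ differentiable, ∇w, ∇φ square-integrable on Ω, traces x ↦ w(x,1), x ↦ φ(x,1) square-integrable on (0,1), and v, η : (0,1) → ℝ square-integrable, the time-discrete monolithic bilinear form is bounded with constant 2: B_m(W,Φ) ≤ 2·|||W|||_m·|||Φ|||_m, where |||W|||²_m = ‖∇w‖²_Ω + (2/(g·Δt²))·‖w‖²_Γ + (g/2)·‖v‖²_Γ. -/

import Mathlib

open MeasureTheory Real Set

noncomputable section

/-- The computational domain `Ω = (0,1) × (0,1) ⊂ ℝ²`. -/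
def Om : Set (ℝ × ℝ) := Ioo (0:ℝ) 1 ×ˢ Ioo (0:ℝ) 1

/-- Partial derivative in the horizontal direction `x`. -/
def pdx (w : ℝ × ℝ → ℝ) (p : ℝ × ℝ) : ℝ := fderiv ℝ w p (1, 0)

/-- Partial derivative in the vertical direction `z`. -/
def pdz (w : ℝ × ℝ → ℝ) (p : ℝ × ℝ) : ℝ := fderiv ℝ w p (0, 1)

/-- Interior inner product `(∇w, ∇φ)_Ω = ∫_Ω ∇w·∇φ`. -/
def ipOm (w φ : ℝ × ℝ → ℝ) : ℝ := ∫ p in Om, (pdx w p * pdx φ p + pdz w p * pdz φ p)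

/-- Free-surface inner product `(a, b)_Γ = ∫₀¹ a(x) b(x) dx`. -/
def ipGa (a b : ℝ → ℝ) : ℝ := ∫ x in Ioo (0:ℝ) 1, a x * b x

/-- The trace of `w : ℝ² → ℝ` on the free surface `Γ` (the top edge `z = 1`). -/
def tr (w : ℝ × ℝ → ℝ) : ℝ → ℝ := fun x => w (x, 1)

/-- The gradient of `w` is square-integrable on `Ω`. -/
def GradL2 (w : ℝ × ℝ → ℝ) : Prop :=
  MemLp (pdx w) 2 (volume.restrict Om) ∧ MemLp (pdz w) 2 (volume.restrict Om)

/-- The trace of `w` on the free surface is square-integrable on `(0,1)`. -/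
def TraceL2 (w : ℝ × ℝ → ℝ) : Prop :=
  MemLp (tr w) 2 (volume.restrict (Ioo (0:ℝ) 1))

/-- A boundary function `v : (0,1) → ℝ` is square-integrable. -/
def BdryL2 (v : ℝ → ℝ) : Prop :=
  MemLp v 2 (volume.restrict (Ioo (0:ℝ) 1))

/-- The time-discrete monolithic bilinear form with parameter `α`:
`B_m(W,Φ) = (∇w,∇φ)_Ω − (2/Δt)(w,η)_Γ + (1/2)(v + (α/g)w, (2/Δt)φ + gη)_Γ`. -/
def Bm (g Δt α : ℝ) (w : ℝ × ℝ → ℝ) (v : ℝ → ℝ) (φ : ℝ × ℝ → ℝ) (η : ℝ → ℝ) : ℝ :=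
  ipOm w φ - (2 / Δt) * ipGa (tr w) η
    + (1 / 2) * ipGa (fun x => v x + (α / g) * tr w x)
        (fun x => (2 / Δt) * tr φ x + g * η x)

/-- The squared monolithic norm `|||W|||²_m = ‖∇w‖²_Ω + (2/(gΔt²))‖w‖²_Γ + (g/2)‖v‖²_Γ`. -/
def nmM2 (g Δt : ℝ) (w : ℝ × ℝ → ℝ) (v : ℝ → ℝ) : ℝ :=
  ipOm w w + (2 / (g * Δt ^ 2)) * ipGa (tr w) (tr w) + (g / 2) * ipGa v v

/- ### Auxiliary lemmas -/

/-- Cauchy–Schwarz for integrals of `L²` functions. -/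
lemma intCS {X : Type*} [MeasurableSpace X] {μ : Measure X} {f g : X → ℝ}
    (hf : MemLp f 2 μ) (hg : MemLp g 2 μ) :
    ∫ x, f x * g x ∂μ ≤ Real.sqrt (∫ x, f x * f x ∂μ) * Real.sqrt (∫ x, g x * g x ∂μ) := by
  set F := hf.toLp f with hF
  set G := hg.toLp g with hG
  have h1 : ∫ x, f x * g x ∂μ = inner ℝ F G := by
    rw [MeasureTheory.L2.inner_def]
    refine (integral_congr_ae ?_).symm
    filter_upwards [hf.coeFn_toLp, hg.coeFn_toLp] with x hx hy
    simp [hF, hG, hx, hy, mul_comm]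
  have h2 : ∫ x, f x * f x ∂μ = ‖F‖ * ‖F‖ := by
    rw [← real_inner_self_eq_norm_mul_norm, MeasureTheory.L2.inner_def]
    refine integral_congr_ae ?_
    filter_upwards [hf.coeFn_toLp] with x hx
    simp [hF, hx, sq]
  have h3 : ∫ x, g x * g x ∂μ = ‖G‖ * ‖G‖ := by
    rw [← real_inner_self_eq_norm_mul_norm, MeasureTheory.L2.inner_def]
    refine integral_congr_ae ?_
    filter_upwards [hg.coeFn_toLp] with x hx
    simp [hG, hx, sq]
  rw [h1, h2, h3, Real.sqrt_mul_self (norm_nonneg _), Real.sqrt_mul_self (norm_nonneg _)]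
  exact real_inner_le_norm F G

/-- The product of two `L²` functions is integrable. -/
lemma intMul {X : Type*} [MeasurableSpace X] {μ : Measure X} {f g : X → ℝ}
    (hf : MemLp f 2 μ) (hg : MemLp g 2 μ) :
    Integrable (fun x => f x * g x) μ := by
  have h := MeasureTheory.L2.integrable_inner (𝕜 := ℝ) (hf.toLp f) (hg.toLp g)
  refine h.congr ?_
  filter_upwards [hf.coeFn_toLp, hg.coeFn_toLp] with x hx hy
  simp [hx, hy, mul_comm]

/-- Two-dimensional Cauchy–Schwarz. -/
lemma cs2 (a b c d : ℝ) :
    a * c + b * d ≤ Real.sqrt (a ^ 2 + b ^ 2) * Real.sqrt (c ^ 2 + d ^ 2) := by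
  have h1 : a * c + b * d ≤ Real.sqrt ((a * c + b * d) ^ 2) := by
    rw [Real.sqrt_sq_eq_abs]; exact le_abs_self _
  have h2 : Real.sqrt ((a * c + b * d) ^ 2) ≤
      Real.sqrt ((a ^ 2 + b ^ 2) * (c ^ 2 + d ^ 2)) :=
    Real.sqrt_le_sqrt (by nlinarith [sq_nonneg (a * d - b * c)])
  rw [Real.sqrt_mul (by positivity)] at h2
  linarith

lemma mixsqrt (c d x y : ℝ) (hc : 0 ≤ c) (hd : 0 ≤ d) :
    Real.sqrt (c * d) * (Real.sqrt x * Real.sqrt y) =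
      Real.sqrt (c * x) * Real.sqrt (d * y) := by
  rw [Real.sqrt_mul hc d, Real.sqrt_mul hc x, Real.sqrt_mul hd y]; ring

lemma final_alg (A1 A2 A3 B1 B2 B3 : ℝ) :
    A1 * B1 + A2 * B2 + A3 * B2 + A2 * B3 + A3 * B3 ≤
      2 * Real.sqrt (A1 ^ 2 + A2 ^ 2 + A3 ^ 2) * Real.sqrt (B1 ^ 2 + B2 ^ 2 + B3 ^ 2) := by
  have c := cs2 A1 (A2 + A3) B1 (B2 + B3)
  have hA : Real.sqrt (A1 ^ 2 + (A2 + A3) ^ 2)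
      ≤ Real.sqrt 2 * Real.sqrt (A1 ^ 2 + A2 ^ 2 + A3 ^ 2) := by
    rw [← Real.sqrt_mul (by norm_num : (0:ℝ) ≤ 2)]
    exact Real.sqrt_le_sqrt (by nlinarith [sq_nonneg (A2 - A3)])
  have hB : Real.sqrt (B1 ^ 2 + (B2 + B3) ^ 2)
      ≤ Real.sqrt 2 * Real.sqrt (B1 ^ 2 + B2 ^ 2 + B3 ^ 2) := by
    rw [← Real.sqrt_mul (by norm_num : (0:ℝ) ≤ 2)]
    exact Real.sqrt_le_sqrt (by nlinarith [sq_nonneg (B2 - B3)])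
  have hprod : Real.sqrt (A1 ^ 2 + (A2 + A3) ^ 2) * Real.sqrt (B1 ^ 2 + (B2 + B3) ^ 2)
      ≤ (Real.sqrt 2 * Real.sqrt (A1 ^ 2 + A2 ^ 2 + A3 ^ 2))
        * (Real.sqrt 2 * Real.sqrt (B1 ^ 2 + B2 ^ 2 + B3 ^ 2)) :=
    mul_le_mul hA hB (Real.sqrt_nonneg _) (by positivity)
  have h22 : Real.sqrt 2 * Real.sqrt 2 = 2 := Real.mul_self_sqrt (by norm_num)
  calc A1 * B1 + A2 * B2 + A3 * B2 + A2 * B3 + A3 * B3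
      = A1 * B1 + (A2 + A3) * (B2 + B3) := by ring
    _ ≤ Real.sqrt (A1 ^ 2 + (A2 + A3) ^ 2) * Real.sqrt (B1 ^ 2 + (B2 + B3) ^ 2) := c
    _ ≤ Real.sqrt 2 * Real.sqrt (A1 ^ 2 + A2 ^ 2 + A3 ^ 2)
        * (Real.sqrt 2 * Real.sqrt (B1 ^ 2 + B2 ^ 2 + B3 ^ 2)) := hprod
    _ = Real.sqrt 2 * Real.sqrt 2
        * (Real.sqrt (A1 ^ 2 + A2 ^ 2 + A3 ^ 2) * Real.sqrt (B1 ^ 2 + B2 ^ 2 + B3 ^ 2)) := by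
        ring
    _ = 2 * Real.sqrt (A1 ^ 2 + A2 ^ 2 + A3 ^ 2) * Real.sqrt (B1 ^ 2 + B2 ^ 2 + B3 ^ 2) := by
        rw [h22]; ring

/-- For `α = 2/Δt` the time-discrete monolithic form is bounded with constant 2:
`B_m(W,Φ) ≤ 2·|||W|||_m·|||Φ|||_m`. -/
theorem monolithic_form_boundedness
    (g Δt : ℝ) (hg : 0 < g) (hΔt : 0 < Δt)
    (w φ : ℝ × ℝ → ℝ) (v η : ℝ → ℝ)
    (hw : Differentiable ℝ w) (hφ : Differentiable ℝ φ)
    (hgw : GradL2 w) (hgφ : GradL2 φ)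
    (htw : TraceL2 w) (htφ : TraceL2 φ)
    (hv : BdryL2 v) (hη : BdryL2 η) :
    Bm g Δt (2 / Δt) w v φ η ≤
      2 * Real.sqrt (nmM2 g Δt w v) * Real.sqrt (nmM2 g Δt φ η) := by
  obtain ⟨hwx, hwz⟩ := hgw
  obtain ⟨hφx, hφz⟩ := hgφ
  have htw' : MemLp (tr w) 2 (volume.restrict (Ioo (0:ℝ) 1)) := htw
  have htφ' : MemLp (tr φ) 2 (volume.restrict (Ioo (0:ℝ) 1)) := htφ
  have hv' : MemLp v 2 (volume.restrict (Ioo (0:ℝ) 1)) := hv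
  have hη' : MemLp η 2 (volume.restrict (Ioo (0:ℝ) 1)) := hη
  set c2 : ℝ := 2 / (g * Δt ^ 2) with hc2def
  have hc2 : 0 ≤ c2 := by positivity
  have hg2 : 0 ≤ g / 2 := by positivity
  -- integrability of the boundary products
  have hvφ := intMul hv' htφ'
  have hvη := intMul hv' hη'
  have hwφ := intMul htw' htφ'
  have hwη := intMul htw' hη'
  -- Step 1: expansion of the bilinear form
  have hexp : Bm g Δt (2 / Δt) w v φ η
      = ipOm w φ + c2 * ipGa (tr w) (tr φ) + (1 / Δt) * ipGa v (tr φ)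
        - (1 / Δt) * ipGa (tr w) η + (g / 2) * ipGa v η := by
    have hint : ∀ x : ℝ, (v x + ((2 / Δt) / g) * tr w x) * ((2 / Δt) * tr φ x + g * η x)
        = (2 / Δt) * (v x * tr φ x) + g * (v x * η x)
          + (2 / Δt * ((2 / Δt) / g)) * (tr w x * tr φ x)
          + (g * ((2 / Δt) / g)) * (tr w x * η x) := by
      intro x; ring
    have hlast : ipGa (fun x => v x + ((2 / Δt) / g) * tr w x)
        (fun x => (2 / Δt) * tr φ x + g * η x)
        = (2 / Δt) * ipGa v (tr φ) + g * ipGa v η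
          + (2 / Δt * ((2 / Δt) / g)) * ipGa (tr w) (tr φ)
          + (g * ((2 / Δt) / g)) * ipGa (tr w) η := by
      have i1 : Integrable (fun x => 2 / Δt * (v x * tr φ x) + g * (v x * η x))
          (volume.restrict (Ioo (0:ℝ) 1)) := (hvφ.const_mul _).add (hvη.const_mul _)
      have i2 : Integrable (fun x => 2 / Δt * (v x * tr φ x) + g * (v x * η x)
          + 2 / Δt * (2 / Δt / g) * (tr w x * tr φ x)) (volume.restrict (Ioo (0:ℝ) 1)) :=
        i1.add (hwφ.const_mul _)
      simp only [ipGa]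
      simp_rw [hint]
      rw [integral_add i2 (hwη.const_mul _), integral_add i1 (hwφ.const_mul _),
        integral_add (hvφ.const_mul _) (hvη.const_mul _),
        integral_const_mul, integral_const_mul, integral_const_mul, integral_const_mul]
    simp only [Bm]
    rw [hlast]
    have hgne : g ≠ 0 := ne_of_gt hg
    have hΔne : Δt ≠ 0 := ne_of_gt hΔt
    simp only [hc2def]
    field_simp
    ring
  -- Step 2: bound for the interior term
  have hpx0 : (0:ℝ) ≤ ∫ p in Om, pdx w p * pdx w p :=
    integral_nonneg fun p => mul_self_nonneg _
  have hpz0 : (0:ℝ) ≤ ∫ p in Om, pdz w p * pdz w p :=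
    integral_nonneg fun p => mul_self_nonneg _
  have hqx0 : (0:ℝ) ≤ ∫ p in Om, pdx φ p * pdx φ p :=
    integral_nonneg fun p => mul_self_nonneg _
  have hqz0 : (0:ℝ) ≤ ∫ p in Om, pdz φ p * pdz φ p :=
    integral_nonneg fun p => mul_self_nonneg _
  have hOmsplit : ∀ (u ψ : ℝ × ℝ → ℝ), MemLp (pdx u) 2 (volume.restrict Om) →
      MemLp (pdz u) 2 (volume.restrict Om) →
      MemLp (pdx ψ) 2 (volume.restrict Om) → MemLp (pdz ψ) 2 (volume.restrict Om) →
      ipOm u ψ = (∫ p in Om, pdx u p * pdx ψ p) + (∫ p in Om, pdz u p * pdz ψ p) := by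
    intro u ψ h1 h2 h3 h4
    simp only [ipOm]
    exact integral_add (intMul h1 h3) (intMul h2 h4)
  have hOm : ipOm w φ ≤ Real.sqrt (ipOm w w) * Real.sqrt (ipOm φ φ) := by
    have e1 := hOmsplit w φ hwx hwz hφx hφz
    have e2 := hOmsplit w w hwx hwz hwx hwz
    have e3 := hOmsplit φ φ hφx hφz hφx hφz
    have h1 := intCS hwx hφx
    have h2 := intCS hwz hφz
    have c := cs2 (Real.sqrt (∫ p in Om, pdx w p * pdx w p))
      (Real.sqrt (∫ p in Om, pdz w p * pdz w p))
      (Real.sqrt (∫ p in Om, pdx φ p * pdx φ p))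
      (Real.sqrt (∫ p in Om, pdz φ p * pdz φ p))
    rw [Real.sq_sqrt hpx0, Real.sq_sqrt hpz0, Real.sq_sqrt hqx0, Real.sq_sqrt hqz0] at c
    rw [e1, e2, e3]
    linarith
  -- nonnegativity of the squared norms
  have hP : (0:ℝ) ≤ ipOm w w := by
    rw [hOmsplit w w hwx hwz hwx hwz]; linarith
  have hQ : (0:ℝ) ≤ ipOm φ φ := by
    rw [hOmsplit φ φ hφx hφz hφx hφz]; linarith
  have hIW : (0:ℝ) ≤ ipGa (tr w) (tr w) := integral_nonneg fun x => mul_self_nonneg _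
  have hIΦ : (0:ℝ) ≤ ipGa (tr φ) (tr φ) := integral_nonneg fun x => mul_self_nonneg _
  have hIV : (0:ℝ) ≤ ipGa v v := integral_nonneg fun x => mul_self_nonneg _
  have hIH : (0:ℝ) ≤ ipGa η η := integral_nonneg fun x => mul_self_nonneg _
  -- abbreviations
  set A1 := Real.sqrt (ipOm w w) with hA1
  set B1 := Real.sqrt (ipOm φ φ) with hB1
  set A2 := Real.sqrt (c2 * ipGa (tr w) (tr w)) with hA2
  set B2 := Real.sqrt (c2 * ipGa (tr φ) (tr φ)) with hB2
  set A3 := Real.sqrt ((g / 2) * ipGa v v) with hA3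
  set B3 := Real.sqrt ((g / 2) * ipGa η η) with hB3
  -- coefficient identities
  have hco : Real.sqrt ((g / 2) * c2) = 1 / Δt := by
    rw [show (g / 2) * c2 = (1 / Δt) ^ 2 by
      simp only [hc2def]; field_simp]
    exact Real.sqrt_sq (by positivity)
  have hco' : Real.sqrt (c2 * (g / 2)) = 1 / Δt := by rw [mul_comm]; exact hco
  have hcc2 : Real.sqrt (c2 * c2) = c2 := Real.sqrt_mul_self hc2
  have hgg : Real.sqrt ((g / 2) * (g / 2)) = g / 2 := Real.sqrt_mul_self hg2
  -- bounds for the boundary terms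
  have hb2 : c2 * ipGa (tr w) (tr φ) ≤ A2 * B2 := by
    have h := intCS htw' htφ'
    calc c2 * ipGa (tr w) (tr φ)
        ≤ c2 * (Real.sqrt (ipGa (tr w) (tr w)) * Real.sqrt (ipGa (tr φ) (tr φ))) :=
          mul_le_mul_of_nonneg_left h hc2
      _ = A2 * B2 := by rw [hA2, hB2, ← mixsqrt c2 c2 _ _ hc2 hc2, hcc2]
  have hb3 : (1 / Δt) * ipGa v (tr φ) ≤ A3 * B2 := by
    have h := intCS hv' htφ'
    calc (1 / Δt) * ipGa v (tr φ)
        ≤ (1 / Δt) * (Real.sqrt (ipGa v v) * Real.sqrt (ipGa (tr φ) (tr φ))) :=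
          mul_le_mul_of_nonneg_left h (by positivity)
      _ = A3 * B2 := by rw [hA3, hB2, ← mixsqrt (g/2) c2 _ _ hg2 hc2, hco]
  have hb4 : -((1 / Δt) * ipGa (tr w) η) ≤ A2 * B3 := by
    have h := intCS htw' hη'.neg
    simp only [Pi.neg_apply, mul_neg, neg_mul, neg_neg, integral_neg] at h
    have h' : -(ipGa (tr w) η) ≤ Real.sqrt (ipGa (tr w) (tr w)) * Real.sqrt (ipGa η η) := h
    calc -((1 / Δt) * ipGa (tr w) η) = (1 / Δt) * (-(ipGa (tr w) η)) := by ring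
      _ ≤ (1 / Δt) * (Real.sqrt (ipGa (tr w) (tr w)) * Real.sqrt (ipGa η η)) :=
          mul_le_mul_of_nonneg_left h' (by positivity)
      _ = A2 * B3 := by rw [hA2, hB3, ← mixsqrt c2 (g/2) _ _ hc2 hg2, hco']
  have hb5 : (g / 2) * ipGa v η ≤ A3 * B3 := by
    have h := intCS hv' hη'
    calc (g / 2) * ipGa v η
        ≤ (g / 2) * (Real.sqrt (ipGa v v) * Real.sqrt (ipGa η η)) :=
          mul_le_mul_of_nonneg_left h hg2
      _ = A3 * B3 := by rw [hA3, hB3, ← mixsqrt (g/2) (g/2) _ _ hg2 hg2, hgg]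
  -- combine
  have hsum : Bm g Δt (2 / Δt) w v φ η ≤ A1 * B1 + A2 * B2 + A3 * B2 + A2 * B3 + A3 * B3 := by
    rw [hexp]; linarith
  -- final algebra
  have hA1n : 0 ≤ A1 := Real.sqrt_nonneg _
  have hA2n : 0 ≤ A2 := Real.sqrt_nonneg _
  have hA3n : 0 ≤ A3 := Real.sqrt_nonneg _
  have hB1n : 0 ≤ B1 := Real.sqrt_nonneg _
  have hB2n : 0 ≤ B2 := Real.sqrt_nonneg _
  have hB3n : 0 ≤ B3 := Real.sqrt_nonneg _
  have hnmW : nmM2 g Δt w v = A1 ^ 2 + A2 ^ 2 + A3 ^ 2 := by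
    rw [hA1, hA2, hA3, Real.sq_sqrt hP, Real.sq_sqrt (by positivity), Real.sq_sqrt (by positivity)]
    simp only [nmM2, hc2def]
  have hnmΦ : nmM2 g Δt φ η = B1 ^ 2 + B2 ^ 2 + B3 ^ 2 := by
    rw [hB1, hB2, hB3, Real.sq_sqrt hQ, Real.sq_sqrt (by positivity), Real.sq_sqrt (by positivity)]
    simp only [nmM2, hc2def]
  rw [hnmW, hnmΦ]
  exact hsum.trans (final_alg A1 A2 A3 B1 B2 B3)
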